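/- arXiv:1203.0090 — 2 statements merged into one kernel-verified Lean document; each statement's English description precedes it below -/
import Mathlib

section
/- Let M be a rank-r paving matroid with n elements, r \ge 2, whose set of hyperplanes (which forms an (r-1)-partition of the ground set) has exactly b_k blocks of cardinality k for each k. Writing T_M(x,y) = \sum_{i,j} t_{ij} x^i y^j, the coefficients satisfy: t_{i0} = \binom{n-i-1}{r-i} for all i \ge 2; t_{10} = \sum_{k \ge 0} \binom{r-2+k}{r-2} b_{k+r-1} + \binom{n-2}{r-1} - \binom{n}{r-1}; and for all j > 0, t_{1j} = \sum_{k \ge 0} \binom{r-2+k}{r-2} b_{k+j+r-1} and t_{0j} = \binom{n-j-1}{r-1} - \sum_{k \ge 0} \binom{r-1+k}{r-1} b_{k+j+r-1}. -/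
open MvPolynomial Finset
open scoped Matroid

namespace TuttePaper

open Classical

variable {α : Type*}

/-- The rank of a set in a matroid: the maximum cardinality of an independent subset. -/
noncomputable def rk (M : Matroid α) (A : Set α) : ℕ :=
  sSup {n | ∃ I, M.Indep I ∧ I ⊆ A ∧ I.ncard = n}

/-- The Tutte polynomial of a matroid with finite ground set, as an element of ℤ[x,y];
the variable `X 0` plays the role of `x` and `X 1` that of `y`:
`T_M(x,y) = ∑_{A ⊆ E} (x-1)^(r(E)-r(A)) (y-1)^(|A|-r(A))`. -/
noncomputable def tutte (M : Matroid α) : MvPolynomial (Fin 2) ℤ :=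
  if hE : M.E.Finite then
    ∑ A ∈ hE.toFinset.powerset,
      (X 0 - 1) ^ (rk M M.E - rk M ↑A) * (X 1 - 1) ^ (A.card - rk M ↑A)
  else 0

/-- The Tutte polynomial with `x` evaluated at `1`, i.e. `T_M(1,y)`, as an element of ℤ[x,y]. -/
noncomputable def tutteX1 (M : Matroid α) : MvPolynomial (Fin 2) ℤ :=
  eval₂ C (fun i => if i = 0 then 1 else X 1) (tutte M)

/-- A loop of a matroid: an element whose singleton has rank zero. -/
def IsLoop (M : Matroid α) (e : α) : Prop := rk M {e} = 0

/-- A coloop of a matroid: an element contained in every basis. -/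
def IsColoop (M : Matroid α) (e : α) : Prop := ∀ B, M.IsBase B → e ∈ B

/-- A circuit of a matroid: a minimal dependent set. -/
def IsCircuit (M : Matroid α) (C : Set α) : Prop :=
  C ⊆ M.E ∧ ¬ M.Indep C ∧ ∀ D ⊂ C, M.Indep D

/-- A hyperplane of a matroid: a flat of rank `r(M) - 1`. -/
def IsHyperplane (M : Matroid α) (H : Set α) : Prop :=
  M.IsFlat H ∧ rk M H + 1 = rk M M.E

/-- Deletion of a set of elements from a matroid. -/
def deleteSet (M : Matroid α) (D : Set α) : Matroid α := M ↾ (M.E \ D)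

/-- Contraction of a set of elements in a matroid, `M/C = (M✶ \ C)✶`. -/
def contractSet (M : Matroid α) (C : Set α) : Matroid α := ((M✶) ↾ (M.E \ C))✶

/-- Deletion of a single element. -/
def deleteElem (M : Matroid α) (e : α) : Matroid α := deleteSet M {e}

/-- Contraction of a single element. -/
def contractElem (M : Matroid α) (e : α) : Matroid α := contractSet M {e}

/-- A matroid is paving if every circuit has size at least the rank of the matroid. -/
def Paving (M : Matroid α) : Prop := ∀ C, IsCircuit M C → rk M M.E ≤ C.ncard

/-- A matroid is sparse paving if it is paving and any two distinct circuits of size `r(M)`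
have symmetric difference of size greater than two. -/
def SparsePaving (M : Matroid α) : Prop :=
  Paving M ∧ ∀ C₁ C₂, IsCircuit M C₁ → IsCircuit M C₂ →
    C₁.ncard = rk M M.E → C₂.ncard = rk M M.E → C₁ ≠ C₂ → 2 < (symmDiff C₁ C₂).ncard

/-- An `m`-partition of a set `E`: a collection of at least two subsets of `E`, each with at
least `m` elements, such that every `m`-element subset of `E` is contained in exactly one
member of the collection. -/
def IsMPartition (m : ℕ) (E : Set α) (T : Set (Set α)) : Prop :=
  1 < T.ncard ∧ (∀ B ∈ T, B ⊆ E ∧ m ≤ B.ncard) ∧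
    ∀ S ⊆ E, S.ncard = m → ∃! B, B ∈ T ∧ S ⊆ B

/-- `tcoef M i j` is the coefficient `t_{ij}` of `x^i y^j` in the Tutte polynomial of `M`. -/
noncomputable def tcoef (M : Matroid α) (i j : ℕ) : ℤ :=
  MvPolynomial.coeff (Finsupp.single (0 : Fin 2) i + Finsupp.single (1 : Fin 2) j) (tutte M)

/-- The characteristic polynomial `χ_N(λ) = ∑_{A ⊆ E} (-1)^{|A|} λ^{r(E)-r(A)}` of a matroid,
evaluated at an element `l` of a commutative ring. -/
noncomputable def charEval {R : Type*} [CommRing R] (N : Matroid α) (l : R) : R :=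
  if hE : N.E.Finite then
    ∑ A ∈ hE.toFinset.powerset, (-1 : R) ^ A.card * l ^ (rk N N.E - rk N ↑A)
  else 0

/-- Crapo's coboundary polynomial `χ̄_M(λ,t) = ∑_{X flat of M} t^{|X|} χ_{M/X}(λ)`,
evaluated at elements `l`, `t` of a commutative ring. -/
noncomputable def cobEval {R : Type*} [CommRing R] (M : Matroid α) (l t : R) : R :=
  if hE : M.E.Finite then
    (hE.toFinset.powerset.filter (fun F : Finset α => M.IsFlat ↑F)).sum
      (fun F => t ^ F.card * charEval (contractSet M ↑F) l)
  else 0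

def cc (p i : ℕ) : ℤ := (-1)^(p+i) * (p.choose i)

lemma cc_eq_zero {p i : ℕ} (h : p < i) : cc p i = 0 := by
  simp [cc, Nat.choose_eq_zero_of_lt h]

lemma X_sub_one_pow (v : Fin 2) (p : ℕ) :
    ((X v - 1 : MvPolynomial (Fin 2) ℤ)) ^ p =
      ∑ k ∈ range (p + 1), monomial (Finsupp.single v k) (cc p k) := by
  have h : (X v - 1 : MvPolynomial (Fin 2) ℤ) = X v + (-1) := by ring
  rw [h, add_pow]
  refine Finset.sum_congr rfl fun k hk => ?_
  rw [mem_range, Nat.lt_succ_iff] at hk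
  have hsign : ((-1 : MvPolynomial (Fin 2) ℤ)) ^ (p - k) = C ((-1 : ℤ)^(p+k)) := by
    have hpk : p + k = (p - k) + 2*k := by omega
    rw [hpk, pow_add, pow_mul]
    simp
  rw [hsign, X_pow_eq_monomial]
  have hnat : ((p.choose k : ℕ) : MvPolynomial (Fin 2) ℤ) = C ((p.choose k : ℤ)) := by
    simp
  rw [hnat, cc, mul_assoc, ← C_mul, mul_comm (monomial _ _), C_mul_monomial, mul_one]

lemma single_pair_eq {k l i j : ℕ} :
    (Finsupp.single (0 : Fin 2) k + Finsupp.single 1 l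
      = Finsupp.single (0 : Fin 2) i + Finsupp.single 1 j) ↔ (k = i ∧ l = j) := by
  constructor
  · intro h
    constructor
    · have h0 := DFunLike.congr_fun h 0
      simpa [Finsupp.single_apply] using h0
    · have h1 := DFunLike.congr_fun h 1
      simpa [Finsupp.single_apply] using h1
  · rintro ⟨rfl, rfl⟩; rfl

lemma coeff_prod_pows (p q i j : ℕ) :
    coeff (Finsupp.single (0 : Fin 2) i + Finsupp.single 1 j)
      ((X 0 - 1 : MvPolynomial (Fin 2) ℤ)^p * (X 1 - 1)^q) = cc p i * cc q j := by
  rw [X_sub_one_pow 0 p, X_sub_one_pow 1 q, Finset.sum_mul_sum]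
  simp only [monomial_mul, coeff_sum, coeff_monomial, single_pair_eq]
  have hinner : ∀ a, (∑ b ∈ range (q + 1), if a = i ∧ b = j then cc p a * cc q b else 0)
      = (if a = i then cc p a * cc q j else 0) := by
    intro a
    by_cases ha : a = i
    · subst ha
      rw [if_pos rfl]
      simp only [true_and]
      rw [Finset.sum_ite_eq' (range (q+1)) j (fun b => cc p a * cc q b)]
      by_cases hjq : j ≤ q
      · rw [if_pos (mem_range.2 (by omega))]
      · rw [if_neg (by rw [mem_range]; omega), cc_eq_zero (show q < j by omega), mul_zero]
    · simp [ha]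
  rw [Finset.sum_congr rfl fun a _ => hinner a]
  rw [Finset.sum_ite_eq' (range (p+1)) i (fun a => cc p a * cc q j)]
  by_cases hip : i ≤ p
  · rw [if_pos (mem_range.2 (by omega))]
  · rw [if_neg (by rw [mem_range]; omega), cc_eq_zero (show p < i by omega), zero_mul]


lemma neg_one_pow_sub {a b : ℕ} (h : b ≤ a) : (-1:ℤ)^(a-b) = (-1)^a * (-1)^b := by
  have h1 : a - b + 2 * b = a + b := by omega
  calc (-1:ℤ)^(a-b) = (-1)^(a-b) * ((-1)^2)^b := by norm_num
    _ = (-1)^(a-b+2*b) := by rw [← pow_mul, ← pow_add]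
    _ = (-1)^(a+b) := by rw [h1]
    _ = (-1)^a * (-1)^b := pow_add _ _ _

lemma trinom {i K v : ℕ} (hv : v ≤ K) :
    (i+K).choose v * ((i+K) - v).choose i = (i+K).choose i * K.choose v := by
  have h1 := Nat.choose_mul (n := i+K) (k := v+i) (s := v) (by omega)
  have h2 := Nat.choose_mul (n := i+K) (k := v+i) (s := i) (by omega)
  have h3 : (v+i).choose v = (v+i).choose i := by
    rw [← Nat.choose_symm (by omega : v ≤ v+i)]
    congr 1
    omega
  rw [h3] at h1
  rw [show v + i - v = i by omega] at h1
  rw [show v + i - i = v by omega] at h2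
  rw [show i + K - i = K by omega] at h2
  omega

lemma boundary (K i : ℕ) (hK : 1 ≤ K) :
    (∑ u ∈ range (K+1), (-1:ℤ)^u * ((i+K).choose (K-u)) * ((i+u).choose i)) = 0 := by
  have hrefl := Finset.sum_range_reflect
    (fun u => (-1:ℤ)^u * ((i+K).choose (K-u)) * ((i+u).choose i)) (K+1)
  rw [← hrefl]
  have hcongr : ∀ v ∈ range (K+1),
      (-1:ℤ)^(K+1-1-v) * ((i+K).choose (K-(K+1-1-v))) * ((i+(K+1-1-v)).choose i)
        = (-1)^K * ((i+K).choose i) * ((-1)^v * (K.choose v)) := by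
    intro v hv
    rw [mem_range, Nat.lt_succ_iff] at hv
    have e1 : K + 1 - 1 - v = K - v := by omega
    have e2 : K - (K - v) = v := by omega
    have e3 : i + (K - v) = (i + K) - v := by omega
    rw [e1, e2, e3, neg_one_pow_sub (by omega : v ≤ K)]
    have e4 : ((i+K).choose v : ℤ) * (((i+K) - v).choose i) =
        ((i+K).choose i : ℤ) * (K.choose v) := by
      exact_mod_cast congrArg (Nat.cast : ℕ → ℤ) (trinom hv)
    push_cast at e4 ⊢
    linear_combination ((-1:ℤ)^K * (-1:ℤ)^v) * e4
  rw [Finset.sum_congr rfl hcongr, ← Finset.mul_sum]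
  have := Int.alternating_sum_range_choose_of_ne (n := K) (by omega)
  rw [this, mul_zero]

lemma master : ∀ (K n i : ℕ), i + K ≤ n →
    (∑ u ∈ range (K+1), (-1:ℤ)^u * (n.choose (K-u)) * ((i+u).choose i))
      = ((n - i - 1).choose K : ℤ) := by
  intro K
  induction K with
  | zero =>
    intro n i _
    simp
  | succ K ih =>
    intro n i h
    induction n, h using Nat.le_induction with
    | base =>
      have hb := boundary (K+1) i (by omega)
      rw [show i + (K+1) - i - 1 = K by omega, Nat.choose_eq_zero_of_lt (by omega)]
      rw [show ((0:ℕ):ℤ) = 0 from rfl]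
      exact hb
    | succ n hn ihn =>
      rw [Finset.sum_range_succ]
      have hsplit : ∀ u ∈ range (K+1),
          (-1:ℤ)^u * ((n+1).choose (K+1-u)) * ((i+u).choose i)
            = (-1:ℤ)^u * (n.choose (K-u)) * ((i+u).choose i)
              + (-1:ℤ)^u * (n.choose (K+1-u)) * ((i+u).choose i) := by
        intro u hu
        rw [mem_range, Nat.lt_succ_iff] at hu
        have h1 : K + 1 - u = (K - u) + 1 := by omega
        rw [h1, Nat.choose_succ_succ', show K - u + 1 = K + 1 - u by omega]
        push_cast
        ring
      rw [Finset.sum_congr rfl hsplit, Finset.sum_add_distrib, ih n i (by omega)]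
      have hlast := ihn
      rw [Finset.sum_range_succ] at hlast
      have hrhs : ((n + 1 - i - 1).choose (K+1) : ℤ)
          = ((n - i - 1).choose K : ℤ) + ((n - i - 1).choose (K+1) : ℤ) := by
        have e1 : n + 1 - i - 1 = (n - i - 1) + 1 := by omega
        rw [e1, Nat.choose_succ_succ]
        push_cast
        ring
      rw [hrhs, ← hlast]
      simp only [Nat.sub_self, Nat.choose_zero_right]
      push_cast
      ring

lemma B1 {n r i : ℕ} (hi : 1 ≤ i) (hr : 1 ≤ r) (hrn : r ≤ n) :
    (∑ a ∈ range (n+1), if a < r then (n.choose a : ℤ) * cc (r-a) i else 0)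
      = if i ≤ r then ((n-i-1).choose (r-i) : ℤ) else 0 := by
  have hflt : Finset.filter (· < r) (range (n+1)) = range r := by
    ext a
    simp only [mem_filter, mem_range]
    omega
  rw [← Finset.sum_filter, hflt]
  by_cases hir : i ≤ r
  · rw [if_pos hir]
    set K := r - i with hK
    have hsub : range (K+1) ⊆ range r := by
      apply Finset.range_subset_range.2
      omega
    rw [← Finset.sum_subset hsub (by
      intro a _ ha
      rw [mem_range, Nat.lt_succ_iff] at ha
      push_neg at ha
      rw [cc_eq_zero (by omega : r - a < i), mul_zero])]
    rw [← Finset.sum_range_reflect]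
    have hcongr : ∀ u ∈ range (K+1),
        (n.choose (K+1-1-u) : ℤ) * cc (r - (K+1-1-u)) i
          = (-1:ℤ)^u * (n.choose (K-u)) * ((i+u).choose i) := by
      intro u hu
      rw [mem_range, Nat.lt_succ_iff] at hu
      have e1 : K + 1 - 1 - u = K - u := by omega
      have e2 : r - (K - u) = i + u := by omega
      rw [e1, e2, cc]
      rw [show i + u + i = u + 2*i by omega, pow_add, pow_mul]
      norm_num
      ring
    rw [Finset.sum_congr rfl hcongr, master K n i (by omega)]
  · rw [if_neg hir]
    apply Finset.sum_eq_zero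
    intro a ha
    rw [mem_range] at ha
    rw [cc_eq_zero (by omega : r - a < i), mul_zero]

lemma B2 {N ρ j : ℕ} (hρ : 1 ≤ ρ) (hd : 2 ≤ ρ ∨ ρ + j ≤ N) :
    (∑ a ∈ range (N+1), if ρ ≤ a then (N.choose a : ℤ) * cc (a-ρ) j else 0)
      = ((N-j-1).choose (ρ-1) : ℤ) := by
  by_cases hreg : ρ + j ≤ N
  · have hflt : Finset.filter (ρ ≤ ·) (range (N+1)) = Finset.Icc ρ N := by
      ext a
      simp only [mem_filter, mem_range, mem_Icc]
      omega
    rw [← Finset.sum_filter, hflt]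
    have hsub : Finset.Icc (ρ+j) N ⊆ Finset.Icc ρ N := by
      apply Finset.Icc_subset_Icc_left
      omega
    rw [← Finset.sum_subset hsub (by
      intro a ha hna
      rw [mem_Icc] at ha
      rw [mem_Icc] at hna
      rw [cc_eq_zero (by omega : a - ρ < j), mul_zero])]
    rw [← Finset.Ico_add_one_right_eq_Icc, Finset.sum_Ico_eq_sum_range]
    set K := N - ρ - j with hK
    rw [show N + 1 - (ρ+j) = K + 1 by omega]
    have hcongr : ∀ u ∈ range (K+1),
        (N.choose (ρ+j+u) : ℤ) * cc (ρ+j+u-ρ) j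
          = (-1:ℤ)^u * (N.choose (K-u)) * ((j+u).choose j) := by
      intro u hu
      rw [mem_range, Nat.lt_succ_iff] at hu
      have e1 : ρ + j + u - ρ = j + u := by omega
      have e2 : N.choose (K - u) = N.choose (ρ+j+u) := by
        rw [show K - u = N - (ρ+j+u) by omega]
        exact Nat.choose_symm (by omega)
      rw [e1, e2, cc]
      rw [show j + u + j = u + 2*j by omega, pow_add, pow_mul]
      norm_num
      ring
    rw [Finset.sum_congr rfl hcongr, master K N j (by omega)]
    congr 1
    rw [show K = (N-j-1) - (ρ-1) by omega]
    exact Nat.choose_symm (by omega)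
  · have hρ2 : 2 ≤ ρ := by tauto
    rw [Nat.choose_eq_zero_of_lt (by omega : N - j - 1 < ρ - 1)]
    rw [show ((0:ℕ):ℤ) = 0 from rfl]
    apply Finset.sum_eq_zero
    intro a ha
    rw [mem_range] at ha
    by_cases h : ρ ≤ a
    · rw [if_pos h, cc_eq_zero (by omega : a - ρ < j), mul_zero]
    · rw [if_neg h]

lemma B3 {h ρ j : ℕ} (hρ : 1 ≤ ρ) (hj : 1 ≤ j) :
    (∑ a ∈ range (h+1), if ρ + 1 ≤ a then (h.choose a : ℤ) * cc (a-ρ) j else 0)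
      = if ρ + j ≤ h then ((h-j-1).choose (ρ-1) : ℤ) else 0 := by
  have hpt : ∀ a, (if ρ + 1 ≤ a then (h.choose a : ℤ) * cc (a-ρ) j else 0)
      = (if ρ ≤ a then (h.choose a : ℤ) * cc (a-ρ) j else 0) := by
    intro a
    by_cases h1 : ρ + 1 ≤ a
    · rw [if_pos h1, if_pos (by omega)]
    · by_cases h2 : ρ ≤ a
      · have : a = ρ := by omega
        subst this
        rw [if_neg h1, if_pos h2, Nat.sub_self, cc_eq_zero (by omega : 0 < j), mul_zero]
      · rw [if_neg h1, if_neg h2]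
  rw [Finset.sum_congr rfl (fun a _ => hpt a)]
  by_cases hcase : ρ + j ≤ h
  · rw [if_pos hcase, B2 hρ (Or.inr hcase)]
  · rw [if_neg hcase]
    apply Finset.sum_eq_zero
    intro a ha
    rw [mem_range] at ha
    by_cases h2 : ρ ≤ a
    · rw [if_pos h2, cc_eq_zero (by omega : a - ρ < j), mul_zero]
    · rw [if_neg h2]


section RkBasics
variable {M : Matroid α}

lemma rk_set_nonempty (M : Matroid α) (A : Set α) :
    {n | ∃ I, M.Indep I ∧ I ⊆ A ∧ I.ncard = n}.Nonempty :=
  ⟨0, ∅, M.empty_indep, Set.empty_subset _, Set.ncard_empty _⟩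

lemma rk_set_bddAbove (hE : M.E.Finite) (A : Set α) :
    BddAbove {n | ∃ I, M.Indep I ∧ I ⊆ A ∧ I.ncard = n} := by
  refine ⟨M.E.ncard, ?_⟩
  rintro n ⟨I, hI, -, rfl⟩
  exact Set.ncard_le_ncard hI.subset_ground hE

lemma exists_rk_witness (hE : M.E.Finite) (A : Set α) :
    ∃ I, M.Indep I ∧ I ⊆ A ∧ I.ncard = rk M A :=
  Nat.sSup_mem (rk_set_nonempty M A) (rk_set_bddAbove hE A)

lemma ncard_le_rk (hE : M.E.Finite) {I A : Set α} (hI : M.Indep I) (hIA : I ⊆ A) :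
    I.ncard ≤ rk M A :=
  le_csSup (rk_set_bddAbove hE A) ⟨I, hI, hIA, rfl⟩

lemma rk_le_ncard {A : Set α} (hA : A.Finite) : rk M A ≤ A.ncard := by
  refine csSup_le (rk_set_nonempty M A) ?_
  rintro n ⟨I, hI, hIA, rfl⟩
  exact Set.ncard_le_ncard hIA hA

lemma rk_mono (hE : M.E.Finite) {A B : Set α} (h : A ⊆ B) : rk M A ≤ rk M B := by
  refine csSup_le (rk_set_nonempty M A) ?_
  rintro n ⟨I, hI, hIA, rfl⟩
  exact ncard_le_rk hE hI (hIA.trans h)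

lemma rk_le_rk_ground (hE : M.E.Finite) (A : Set α) : rk M A ≤ rk M M.E := by
  refine csSup_le (rk_set_nonempty M A) ?_
  rintro n ⟨I, hI, _, rfl⟩
  exact ncard_le_rk hE hI hI.subset_ground

lemma indep_rk_eq (hE : M.E.Finite) {I : Set α} (hI : M.Indep I) : rk M I = I.ncard :=
  le_antisymm (rk_le_ncard (hE.subset hI.subset_ground)) (ncard_le_rk hE hI subset_rfl)

lemma basis_ncard_rk (hE : M.E.Finite) {I A : Set α} (hIA : M.IsBasis I A) :
    I.ncard = rk M A := by
  refine le_antisymm (ncard_le_rk hE hIA.indep hIA.subset) ?_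
  obtain ⟨J, hJ, hJA, hJcard⟩ := exists_rk_witness hE A
  rw [← hJcard]
  by_contra hlt
  push_neg at hlt
  have hIfin : I.Finite := hE.subset hIA.indep.subset_ground
  have hJfin : J.Finite := hE.subset hJ.subset_ground
  have henc : I.encard < J.encard := by
    rw [hIfin.encard_eq_coe_toFinset_card, hJfin.encard_eq_coe_toFinset_card]
    rw [Set.ncard_eq_toFinset_card _ hIfin, Set.ncard_eq_toFinset_card _ hJfin] at hlt
    exact_mod_cast hlt
  obtain ⟨e, he, hins⟩ := hIA.indep.augment hJ henc
  have : I = insert e I :=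
    hIA.eq_of_subset_indep hins (Set.subset_insert _ _)
      (Set.insert_subset (hJA he.1) hIA.subset)
  exact he.2 (this ▸ Set.mem_insert e I)

lemma exists_circuit_subset (hE : M.E.Finite) {A : Set α} (hA : A ⊆ M.E)
    (hdep : ¬ M.Indep A) : ∃ C, C ⊆ A ∧ IsCircuit M C := by
  have hne : {m | ∃ D, D ⊆ A ∧ ¬ M.Indep D ∧ D.ncard = m}.Nonempty :=
    ⟨A.ncard, A, subset_rfl, hdep, rfl⟩
  obtain ⟨D, hDA, hDdep, hDcard⟩ := Nat.sInf_mem hne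
  refine ⟨D, hDA, hDA.trans hA, hDdep, ?_⟩
  intro D' hD'
  by_contra hD'dep
  have hmem : D'.ncard ∈ {m | ∃ D, D ⊆ A ∧ ¬ M.Indep D ∧ D.ncard = m} :=
    ⟨D', hD'.subset.trans hDA, hD'dep, rfl⟩
  have hle := Nat.sInf_le hmem
  have hlt : D'.ncard < D.ncard := Set.ncard_lt_ncard hD' (hE.subset (hDA.trans hA))
  omega

lemma indep_of_ncard_lt (hE : M.E.Finite) (hpav : Paving M) {S : Set α} (hS : S ⊆ M.E)
    (h : S.ncard < rk M M.E) : M.Indep S := by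
  by_contra hdep
  obtain ⟨C, hCS, hC⟩ := exists_circuit_subset hE hS hdep
  have h1 := hpav C hC
  have h2 : C.ncard ≤ S.ncard := Set.ncard_le_ncard hCS (hE.subset hS)
  omega

lemma rk_ge_of_ncard_ge (hE : M.E.Finite) (hpav : Paving M) {A : Set α} (hA : A ⊆ M.E)
    {m : ℕ} (hm : m < rk M M.E) (hcard : m ≤ A.ncard) : m ≤ rk M A := by
  obtain ⟨S, hSA, hScard⟩ := Set.exists_subset_card_eq hcard
  have hSi : M.Indep S := indep_of_ncard_lt hE hpav (hSA.trans hA) (hScard ▸ hm)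
  calc m = S.ncard := hScard.symm
    _ ≤ rk M A := ncard_le_rk hE hSi hSA

end RkBasics

section Hyp
variable {M : Matroid α}

lemma flat_closure (M : Matroid α) (A : Set α) : M.IsFlat (M.closure A) := by
  have hne : Nonempty {F : Set α // M.IsFlat F ∧ A ∩ M.E ⊆ F} :=
    ⟨⟨M.E, M.ground_isFlat, Set.inter_subset_right⟩⟩
  have h : M.closure A = ⋂ F : {F : Set α // M.IsFlat F ∧ A ∩ M.E ⊆ F}, F.1 := by
    rw [Matroid.closure_def, Set.sInter_eq_iInter]
    rfl
  rw [h]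
  exact Matroid.IsFlat.iInter fun F => F.2.1

lemma rk_closure_eq (hE : M.E.Finite) {A : Set α} (hA : A ⊆ M.E) :
    rk M (M.closure A) = rk M A := by
  obtain ⟨I, hI⟩ := M.exists_isBasis A hA
  rw [← basis_ncard_rk hE hI, ← basis_ncard_rk hE hI.isBasis_closure_right]

lemma closure_hyperplane (hE : M.E.Finite) {A : Set α} (hA : A ⊆ M.E)
    (hrkA : rk M A + 1 = rk M M.E) :
    IsHyperplane M (M.closure A) ∧ A ⊆ M.closure A := by
  refine ⟨⟨flat_closure M A, ?_⟩, M.subset_closure A hA⟩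
  rw [rk_closure_eq hE hA]
  exact hrkA

lemma hyperplane_eq_of_subset (hE : M.E.Finite) {H₁ H₂ A : Set α}
    (h1 : IsHyperplane M H₁) (h2 : IsHyperplane M H₂) (hA1 : A ⊆ H₁) (hA2 : A ⊆ H₂)
    (hrkA : rk M H₁ ≤ rk M A) : H₁ = H₂ := by
  have hAE : A ⊆ M.E := hA1.trans h1.1.subset_ground
  obtain ⟨I, hI⟩ := M.exists_isBasis A hAE
  have hIcard : I.ncard = rk M A := basis_ncard_rk hE hI
  have hrk12 : rk M H₂ = rk M H₁ := by
    have a := h1.2; have b := h2.2; omega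
  have key : ∀ H, IsHyperplane M H → A ⊆ H → rk M H = rk M H₁ → M.IsBasis I H := by
    intro H hH hAH hrkH
    rw [Matroid.isBasis_iff hH.1.subset_ground]
    refine ⟨hI.indep, hI.subset.trans hAH, ?_⟩
    intro J hJ hIJ hJH
    have hJle : J.ncard ≤ rk M H := ncard_le_rk hE hJ hJH
    have hJI : J.ncard ≤ I.ncard := by omega
    exact Set.eq_of_subset_of_ncard_le hIJ hJI (hE.subset hJ.subset_ground)
  have b1 := key H₁ h1 hA1 rfl
  have b2 := key H₂ h2 hA2 hrk12
  exact subset_antisymm (h2.1.subset_of_isBasis_of_isBasis b2 b1)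
    (h1.1.subset_of_isBasis_of_isBasis b1 b2)

lemma hyperplane_rk (h : IsHyperplane M H) (h2 : 2 ≤ rk M M.E) :
    rk M H = rk M M.E - 1 := by
  have := h.2; omega

lemma hyperplane_ncard_ge (hE : M.E.Finite) {H : Set α} (hH : IsHyperplane M H) :
    rk M M.E - 1 ≤ H.ncard := by
  obtain ⟨I, hI, hIH, hIcard⟩ := exists_rk_witness hE H
  have h1 : I.ncard ≤ H.ncard :=
    Set.ncard_le_ncard hIH (hE.subset hH.1.subset_ground)
  have := hH.2
  omega

end Hyp

/-- The finset of (finset) hyperplanes. -/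
noncomputable def Hset (M : Matroid α) (hE : M.E.Finite) : Finset (Finset α) :=
  hE.toFinset.powerset.filter (fun H => IsHyperplane M ↑H)

section Struct
variable {M : Matroid α} {r n : ℕ}

variable (hE : M.E.Finite)
include hE

lemma mem_Hset {H : Finset α} : H ∈ Hset M hE ↔ IsHyperplane M ↑H := by
  simp only [Hset, mem_filter, mem_powerset, and_iff_right_iff_imp]
  intro h
  rw [← Finset.coe_subset, hE.coe_toFinset]
  exact h.1.subset_ground

lemma hyp_toFinset {H : Set α} (hH : IsHyperplane M H) :
    ∃ Hf ∈ Hset M hE, (↑Hf : Set α) = H := by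
  refine ⟨(hE.subset hH.1.subset_ground).toFinset, ?_, (hE.subset hH.1.subset_ground).coe_toFinset⟩
  rw [mem_Hset hE, (hE.subset hH.1.subset_ground).coe_toFinset]
  exact hH

lemma Hset_card_le {H : Finset α} (hH : H ∈ Hset M hE) (hn : M.E.ncard = n) :
    H.card ≤ n := by
  rw [mem_Hset hE] at hH
  rw [← Set.ncard_coe_finset, ← hn]
  exact Set.ncard_le_ncard hH.1.subset_ground hE

lemma Hset_card_ge {H : Finset α} (hH : H ∈ Hset M hE) (hr : rk M M.E = r) :
    r - 1 ≤ H.card := by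
  rw [mem_Hset hE] at hH
  rw [← Set.ncard_coe_finset]
  have := hyperplane_ncard_ge hE hH
  omega

variable (hr : rk M M.E = r) (h2 : 2 ≤ r) (hpav : Paving M)

include hE hr h2 hpav

lemma rk_small {A : Finset α} (hA : ↑A ⊆ M.E) (hcard : A.card < r) : rk M ↑A = A.card := by
  rw [indep_rk_eq hE (indep_of_ncard_lt hE hpav hA
    (by rw [Set.ncard_coe_finset, hr]; exact hcard)), Set.ncard_coe_finset]

lemma rk_ge' {A : Finset α} (hA : ↑A ⊆ M.E) (hcard : r - 1 ≤ A.card) :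
    r - 1 ≤ rk M ↑A := by
  apply rk_ge_of_ncard_ge hE hpav hA (by omega : r - 1 < rk M M.E)
  rw [Set.ncard_coe_finset]
  exact hcard

lemma rk_inH {A : Finset α} (hA : ↑A ⊆ M.E) (hcard : r ≤ A.card)
    {H : Set α} (hH : IsHyperplane M H) (hAH : ↑A ⊆ H) : rk M ↑A = r - 1 := by
  have hle : rk M ↑A ≤ rk M H := rk_mono hE hAH
  have hHr : rk M H = r - 1 := by rw [hyperplane_rk hH (hr ▸ h2), hr]
  have hge := rk_ge' hE hr h2 hpav hA (by omega)
  omega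

lemma rk_free {A : Finset α} (hA : ↑A ⊆ M.E) (hcard : r ≤ A.card)
    (hnH : ¬ ∃ H, IsHyperplane M H ∧ ↑A ⊆ H) : rk M ↑A = r := by
  have hle : rk M ↑A ≤ r := hr ▸ rk_le_rk_ground hE _
  have hge := rk_ge' hE hr h2 hpav hA (by omega)
  by_contra hne
  have hrk : rk M ↑A + 1 = rk M M.E := by rw [hr]; omega
  obtain ⟨hhyp, hsub⟩ := closure_hyperplane hE hA hrk
  exact hnH ⟨M.closure ↑A, hhyp, hsub⟩

lemma hyp_disjoint {H₁ H₂ : Finset α} (hH₁ : H₁ ∈ Hset M hE) (hH₂ : H₂ ∈ Hset M hE)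
    (hne : H₁ ≠ H₂) {A : Finset α} (hA₁ : A ⊆ H₁) (hA₂ : A ⊆ H₂)
    (hcard : r - 1 ≤ A.card) : False := by
  rw [mem_Hset hE] at hH₁ hH₂
  have hAE : (↑A : Set α) ⊆ M.E := (Finset.coe_subset.2 hA₁).trans hH₁.1.subset_ground
  have h1 : rk M ↑H₁ = r - 1 := by rw [hyperplane_rk hH₁ (hr ▸ h2), hr]
  have h2' : rk M ↑A ≤ r - 1 := h1 ▸ rk_mono hE (Finset.coe_subset.2 hA₁)
  have h3 : r - 1 ≤ rk M ↑A := rk_ge' hE hr h2 hpav hAE hcard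
  apply hne
  apply Finset.coe_injective
  exact hyperplane_eq_of_subset hE hH₁ hH₂ (Finset.coe_subset.2 hA₁)
    (Finset.coe_subset.2 hA₂) (by omega)

lemma part_count (hn : M.E.ncard = n) :
    (∑ H ∈ Hset M hE, ((H.card.choose (r-1) : ℤ))) = (n.choose (r-1) : ℤ) := by
  have hcardE : hE.toFinset.card = n := by
    rw [← Set.ncard_eq_toFinset_card M.E hE, hn]
  have hbi : hE.toFinset.powersetCard (r-1) =
      (Hset M hE).biUnion (fun H => H.powersetCard (r-1)) := by
    ext S
    simp only [mem_powersetCard, mem_biUnion]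
    constructor
    · rintro ⟨hSE, hScard⟩
      have hSE' : (↑S : Set α) ⊆ M.E := by
        rw [← hE.coe_toFinset]; exact_mod_cast hSE
      have hSi : M.Indep ↑S := indep_of_ncard_lt hE hpav hSE'
        (by rw [Set.ncard_coe_finset, hScard, hr]; omega)
      have hSrk : rk M ↑S = r - 1 := by
        rw [indep_rk_eq hE hSi, Set.ncard_coe_finset, hScard]
      obtain ⟨hhyp, hsub⟩ := closure_hyperplane hE hSE' (by rw [hSrk, hr]; omega)
      obtain ⟨Hf, hHf, hHfc⟩ := hyp_toFinset hE hhyp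
      refine ⟨Hf, hHf, ?_, hScard⟩
      rw [← Finset.coe_subset, hHfc]
      exact hsub
    · rintro ⟨H, hH, hSH, hScard⟩
      refine ⟨hSH.trans ?_, hScard⟩
      rw [← Finset.coe_subset, hE.coe_toFinset]
      exact ((mem_Hset hE).1 hH).1.subset_ground
  have hdisj : ∀ H₁ ∈ Hset M hE, ∀ H₂ ∈ Hset M hE, H₁ ≠ H₂ →
      Disjoint (H₁.powersetCard (r-1)) (H₂.powersetCard (r-1)) := by
    intro H₁ h₁ H₂ h₂ hne
    rw [Finset.disjoint_left]
    intro A hA₁ hA₂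
    rw [mem_powersetCard] at hA₁ hA₂
    exact hyp_disjoint hE hr h2 hpav h₁ h₂ hne hA₁.1 hA₂.1 (by omega)
  have := Finset.card_biUnion hdisj
  rw [← hbi] at this
  rw [Finset.card_powersetCard, hcardE] at this
  simp only [Finset.card_powersetCard] at this
  rw [← Nat.cast_sum]
  exact_mod_cast congrArg (Nat.cast : ℕ → ℤ) this.symm

lemma grouph (hn : M.E.ncard = n) (b : ℕ → ℕ)
    (hb : ∀ k, b k = {H : Set α | IsHyperplane M H ∧ H.ncard = k}.ncard)
    (ψ : ℕ → ℤ) (d : ℕ) :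
    (∑ k ∈ range (n+1), ψ k * (b (k + d) : ℤ))
      = ∑ H ∈ Hset M hE, (if d ≤ H.card then ψ (H.card - d) else 0) := by
  have hbcard : ∀ m, (b m : ℤ) = (((Hset M hE).filter (fun H => H.card = m)).card : ℤ) := by
    intro m
    have hset : {H : Set α | IsHyperplane M H ∧ H.ncard = m}
        = (fun F : Finset α => (↑F : Set α)) ''
            ↑((Hset M hE).filter (fun H => H.card = m)) := by
      ext H
      simp only [Set.mem_setOf_eq, Set.mem_image, Finset.mem_coe, mem_filter]
      constructor
      · rintro ⟨hH, hcard⟩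
        obtain ⟨Hf, hHf, hHfc⟩ := hyp_toFinset hE hH
        refine ⟨Hf, ⟨hHf, ?_⟩, hHfc⟩
        rw [← Set.ncard_coe_finset, hHfc, hcard]
      · rintro ⟨F, ⟨hF, hFcard⟩, rfl⟩
        exact ⟨(mem_Hset hE).1 hF, by rw [Set.ncard_coe_finset, hFcard]⟩
    rw [hb m, hset, Set.ncard_image_of_injective _ Finset.coe_injective,
      Set.ncard_coe_finset]
  calc (∑ k ∈ range (n+1), ψ k * (b (k + d) : ℤ))
      = ∑ k ∈ range (n+1), ∑ H ∈ Hset M hE,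
          (if H.card = k + d then ψ k else 0) := by
        refine Finset.sum_congr rfl fun k _ => ?_
        rw [hbcard (k+d), Finset.card_filter, Nat.cast_sum, Finset.mul_sum]
        refine Finset.sum_congr rfl fun H _ => ?_
        by_cases h : H.card = k + d <;> simp [h]
    _ = ∑ H ∈ Hset M hE, ∑ k ∈ range (n+1), (if H.card = k + d then ψ k else 0) :=
        Finset.sum_comm
    _ = ∑ H ∈ Hset M hE, (if d ≤ H.card then ψ (H.card - d) else 0) := by
        refine Finset.sum_congr rfl fun H hH => ?_
        by_cases hd : d ≤ H.card
        · rw [if_pos hd]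
          rw [Finset.sum_eq_single_of_mem (H.card - d)
            (mem_range.2 (by have := Hset_card_le hE hH hn; omega))]
          · rw [if_pos (by omega)]
          · intro k _ hk
            rw [if_neg (by omega)]
        · rw [if_neg hd]
          apply Finset.sum_eq_zero
          intro k _
          rw [if_neg (by omega)]

lemma central (hn : M.E.ncard = n) (i j : ℕ) :
    tcoef M i j =
      ((∑ a ∈ range (n+1), if a < r then (n.choose a : ℤ) * (cc (r-a) i * cc 0 j) else 0)
      + (∑ a ∈ range (n+1), if r ≤ a then (n.choose a : ℤ) * (cc 0 i * cc (a-r) j) else 0))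
      + ∑ H ∈ Hset M hE, ∑ a ∈ range (H.card+1),
          (if r ≤ a then (H.card.choose a : ℤ) *
            (cc 1 i * cc (a-r+1) j - cc 0 i * cc (a-r) j) else 0) := by
  have hcardE : hE.toFinset.card = n := by
    rw [← Set.ncard_eq_toFinset_card M.E hE, hn]
  have step0 : tcoef M i j = ∑ A ∈ hE.toFinset.powerset,
      cc (rk M M.E - rk M ↑A) i * cc (A.card - rk M ↑A) j := by
    simp only [tcoef, tutte, dif_pos hE, MvPolynomial.coeff_sum]
    exact Finset.sum_congr rfl fun A _ => coeff_prod_pows _ _ i j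
  have hclass : ∀ A ∈ hE.toFinset.powerset,
      cc (rk M M.E - rk M ↑A) i * cc (A.card - rk M ↑A) j
      = ((if A.card < r then (cc (r - A.card) i * cc 0 j)
            else (cc 0 i * cc (A.card - r) j))
        + (if r ≤ A.card ∧ ∃ H, IsHyperplane M H ∧ ↑A ⊆ H
            then (cc 1 i * cc (A.card - r + 1) j - cc 0 i * cc (A.card - r) j) else 0)) := by
    intro A hA
    have hAE : (↑A : Set α) ⊆ M.E := by
      rw [← hE.coe_toFinset]
      exact_mod_cast Finset.mem_powerset.1 hA
    by_cases hsmall : A.card < r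
    · rw [if_pos hsmall, if_neg (fun h => absurd h.1 (by omega)),
        rk_small hE hr h2 hpav hAE hsmall, hr, Nat.sub_self, add_zero]
    · push_neg at hsmall
      rw [if_neg (by omega)]
      by_cases hinh : ∃ H, IsHyperplane M H ∧ (↑A : Set α) ⊆ H
      · obtain ⟨H, hH, hAH⟩ := hinh
        rw [if_pos ⟨hsmall, H, hH, hAH⟩,
          rk_inH hE hr h2 hpav hAE hsmall hH hAH, hr,
          show r - (r-1) = 1 by omega, show A.card - (r-1) = A.card - r + 1 by omega]
        ring
      · rw [if_neg (fun h => hinh h.2),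
          rk_free hE hr h2 hpav hAE hsmall hinh, hr, Nat.sub_self, add_zero]
  rw [step0, Finset.sum_congr rfl hclass, Finset.sum_add_distrib]
  congr 1
  · -- first part
    rw [Finset.sum_powerset_apply_card
      (fun m => if m < r then (cc (r - m) i * cc 0 j) else (cc 0 i * cc (m-r) j)), hcardE]
    rw [← Finset.sum_add_distrib]
    refine Finset.sum_congr rfl fun a _ => ?_
    by_cases ha : a < r
    · rw [if_pos ha, if_pos ha, if_neg (by omega), add_zero, nsmul_eq_mul]
    · rw [if_neg ha, if_neg ha, if_pos (by omega), zero_add, nsmul_eq_mul]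
  · -- hyperplane part
    rw [← Finset.sum_filter]
    have hbiu : (hE.toFinset.powerset.filter
        (fun A : Finset α => r ≤ A.card ∧ ∃ H, IsHyperplane M H ∧ (↑A : Set α) ⊆ H))
        = (Hset M hE).biUnion (fun H => H.powerset.filter (fun A => r ≤ A.card)) := by
      ext A
      simp only [mem_filter, mem_powerset, mem_biUnion]
      constructor
      · rintro ⟨hAE, hcard, H, hH, hAH⟩
        obtain ⟨Hf, hHf, hHfc⟩ := hyp_toFinset hE hH
        exact ⟨Hf, hHf, ⟨by rw [← Finset.coe_subset, hHfc]; exact hAH, hcard⟩⟩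
      · rintro ⟨H, hH, hAH, hcard⟩
        refine ⟨hAH.trans ?_, hcard, ↑H, (mem_Hset hE).1 hH, Finset.coe_subset.2 hAH⟩
        rw [← Finset.coe_subset, hE.coe_toFinset]
        exact ((mem_Hset hE).1 hH).1.subset_ground
    rw [hbiu, Finset.sum_biUnion (by
      intro H₁ h₁ H₂ h₂ hne
      refine Finset.disjoint_left.2 fun {A} hA₁ hA₂ => ?_
      rw [mem_filter] at hA₁ hA₂
      exact hyp_disjoint hE hr h2 hpav (Finset.mem_coe.1 h₁) (Finset.mem_coe.1 h₂) hne
        ((Finset.mem_powerset).1 hA₁.1) ((Finset.mem_powerset).1 hA₂.1) (by omega))]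
    refine Finset.sum_congr rfl fun H _ => ?_
    rw [Finset.sum_filter]
    rw [Finset.sum_powerset_apply_card
      (fun m => if r ≤ m then (cc 1 i * cc (m - r + 1) j - cc 0 i * cc (m-r) j) else 0)]
    refine Finset.sum_congr rfl fun a _ => ?_
    by_cases ha : r ≤ a
    · rw [if_pos ha, if_pos ha, nsmul_eq_mul]
    · rw [if_neg ha, if_neg ha, smul_zero]

end Struct


lemma cc00 : cc 0 0 = 1 := by simp [cc]
lemma cc11 : cc 1 1 = 1 := by simp [cc]
lemma cc10 : cc 1 0 = -1 := by simp [cc]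
lemma cc_succ_zero (m : ℕ) : cc (m+1) 0 = -(cc m 0) := by
  simp [cc, pow_succ]

lemma cc_step (m j : ℕ) (hj : 1 ≤ j) :
    cc 1 0 * cc (m+1) j - cc 0 0 * cc m j = -(cc m (j-1)) := by
  have hp := Nat.choose_succ_succ' m (j-1)
  rw [show j-1+1 = j by omega] at hp
  simp only [cc, Nat.choose_zero_right]
  rw [hp, show m+1+j = (m+(j-1)) + 2 by omega, show m+j = (m+(j-1)) + 1 by omega]
  push_cast
  ring


/-- Brylawski's formulas for the Tutte coefficients of a rank-`r` paving
matroid with `n` elements whose `(r-1)`-partition of hyperplanes has `b k` blocks of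
cardinality `k`. -/
theorem tcoef_paving (M : Matroid α) (hE : M.E.Finite) (r n : ℕ)
    (hr : rk M M.E = r) (h2 : 2 ≤ r) (hn : M.E.ncard = n) (hpav : Paving M)
    (b : ℕ → ℕ) (hb : ∀ k, b k = {H : Set α | IsHyperplane M H ∧ H.ncard = k}.ncard) :
    (∀ i, 2 ≤ i → tcoef M i 0 =
        if i ≤ r then ((n - i - 1).choose (r - i) : ℤ) else 0) ∧
    (tcoef M 1 0 = (∑ k ∈ range (n + 1), ((r - 2 + k).choose (r - 2) : ℤ) * b (k + r - 1))
        + ((n - 2).choose (r - 1) : ℤ) - (n.choose (r - 1) : ℤ)) ∧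
    (∀ j, 0 < j → tcoef M 1 j =
        ∑ k ∈ range (n + 1), ((r - 2 + k).choose (r - 2) : ℤ) * b (k + j + r - 1)) ∧
    (∀ j, 0 < j → tcoef M 0 j = ((n - j - 1).choose (r - 1) : ℤ)
        - ∑ k ∈ range (n + 1), ((r - 1 + k).choose (r - 1) : ℤ) * b (k + j + r - 1)) := by
  have hrn : r ≤ n := by
    obtain ⟨I, hI, hIE, hIcard⟩ := exists_rk_witness hE M.E
    have := Set.ncard_le_ncard hIE hE
    omega
  refine ⟨?_, ?_, ?_, ?_⟩
  · -- Case 1 : i ≥ 2, j = 0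
    intro i hi
    rw [central hE hr h2 hpav hn i 0]
    have e1 : (∑ a ∈ range (n+1),
        if a < r then (n.choose a : ℤ) * (cc (r-a) i * cc 0 0) else 0)
        = if i ≤ r then ((n-i-1).choose (r-i) : ℤ) else 0 := by
      rw [← B1 (show 1 ≤ i by omega) (show 1 ≤ r by omega) hrn]
      refine Finset.sum_congr rfl fun a _ => ?_
      by_cases h : a < r
      · rw [if_pos h, if_pos h, cc00, mul_one]
      · rw [if_neg h, if_neg h]
    have e2 : (∑ a ∈ range (n+1),
        if r ≤ a then (n.choose a : ℤ) * (cc 0 i * cc (a-r) 0) else 0) = 0 := by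
      refine Finset.sum_eq_zero fun a _ => ?_
      rw [cc_eq_zero (show 0 < i by omega), zero_mul, mul_zero, ite_self]
    have e3 : (∑ H ∈ Hset M hE, ∑ a ∈ range (H.card+1),
        (if r ≤ a then (H.card.choose a : ℤ) *
          (cc 1 i * cc (a-r+1) 0 - cc 0 i * cc (a-r) 0) else 0)) = 0 := by
      refine Finset.sum_eq_zero fun H _ => Finset.sum_eq_zero fun a _ => ?_
      rw [cc_eq_zero (show 1 < i by omega), cc_eq_zero (show 0 < i by omega),
        zero_mul, zero_mul, sub_zero, mul_zero, ite_self]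
    rw [e1, e2, e3, add_zero, add_zero]
  · -- Case 2 : t_{1,0}
    rw [central hE hr h2 hpav hn 1 0]
    have e1 : (∑ a ∈ range (n+1),
        if a < r then (n.choose a : ℤ) * (cc (r-a) 1 * cc 0 0) else 0)
        = ((n-2).choose (r-1) : ℤ) := by
      have hB := B1 (le_refl 1) (show 1 ≤ r by omega) hrn
      rw [if_pos (by omega), show n - 1 - 1 = n - 2 by omega] at hB
      rw [← hB]
      refine Finset.sum_congr rfl fun a _ => ?_
      by_cases h : a < r
      · rw [if_pos h, if_pos h, cc00, mul_one]
      · rw [if_neg h, if_neg h]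
    have e2 : (∑ a ∈ range (n+1),
        if r ≤ a then (n.choose a : ℤ) * (cc 0 1 * cc (a-r) 0) else 0) = 0 := by
      refine Finset.sum_eq_zero fun a _ => ?_
      rw [cc_eq_zero (show 0 < 1 by omega), zero_mul, mul_zero, ite_self]
    have e3 : (∑ H ∈ Hset M hE, ∑ a ∈ range (H.card+1),
        (if r ≤ a then (H.card.choose a : ℤ) *
          (cc 1 1 * cc (a-r+1) 0 - cc 0 1 * cc (a-r) 0) else 0))
        = ∑ H ∈ Hset M hE, -(((H.card-1).choose (r-1) : ℤ)) := by
      refine Finset.sum_congr rfl fun H _ => ?_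
      have hB := B2 (N := H.card) (ρ := r) (j := 0) (show 1 ≤ r by omega) (Or.inl h2)
      rw [show H.card - 0 - 1 = H.card - 1 by omega] at hB
      rw [← hB, ← Finset.sum_neg_distrib]
      refine Finset.sum_congr rfl fun a _ => ?_
      by_cases ha : r ≤ a
      · rw [if_pos ha, if_pos ha, cc11, one_mul,
          cc_eq_zero (show 0 < 1 by omega), zero_mul, sub_zero,
          cc_succ_zero (a-r)]
        ring
      · rw [if_neg ha, if_neg ha, neg_zero]
    rw [e1, e2, e3, add_zero]
    have hg := grouph hE hr h2 hpav hn b hb (fun k => ((r-2+k).choose (r-2) : ℤ)) (r-1)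
    have hg' : (∑ k ∈ range (n + 1), ((r - 2 + k).choose (r - 2) : ℤ) * b (k + r - 1))
        = ∑ H ∈ Hset M hE, (((H.card-1).choose (r-2) : ℤ)) := by
      rw [show (∑ k ∈ range (n + 1), ((r - 2 + k).choose (r - 2) : ℤ) * b (k + r - 1))
          = ∑ k ∈ range (n + 1), ((r - 2 + k).choose (r - 2) : ℤ) * b (k + (r - 1)) from
        Finset.sum_congr rfl fun k _ => by rw [show k + (r-1) = k + r - 1 by omega]]
      rw [hg]
      refine Finset.sum_congr rfl fun H hH => ?_
      have hc := Hset_card_ge hE hH hr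
      rw [if_pos (by omega)]
      congr 2
      omega
    have hpart := part_count hE hr h2 hpav hn
    have hpascal : (∑ H ∈ Hset M hE, ((H.card.choose (r-1) : ℤ)))
        = (∑ H ∈ Hset M hE, (((H.card-1).choose (r-2) : ℤ)))
          + ∑ H ∈ Hset M hE, (((H.card-1).choose (r-1) : ℤ)) := by
      rw [← Finset.sum_add_distrib]
      refine Finset.sum_congr rfl fun H hH => ?_
      have hc := Hset_card_ge hE hH hr
      have h3 := Nat.choose_succ_succ' (H.card - 1) (r - 2)
      rw [show H.card - 1 + 1 = H.card by omega, show r - 2 + 1 = r - 1 by omega] at h3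
      rw [h3]
      push_cast
      ring
    rw [hg', Finset.sum_neg_distrib]
    linarith [hpart, hpascal]
  · -- Case 3 : t_{1,j}, j > 0
    intro j hj
    rw [central hE hr h2 hpav hn 1 j]
    have e1 : (∑ a ∈ range (n+1),
        if a < r then (n.choose a : ℤ) * (cc (r-a) 1 * cc 0 j) else 0) = 0 := by
      refine Finset.sum_eq_zero fun a _ => ?_
      rw [cc_eq_zero (show 0 < j by omega), mul_zero, mul_zero, ite_self]
    have e2 : (∑ a ∈ range (n+1),
        if r ≤ a then (n.choose a : ℤ) * (cc 0 1 * cc (a-r) j) else 0) = 0 := by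
      refine Finset.sum_eq_zero fun a _ => ?_
      rw [cc_eq_zero (show 0 < 1 by omega), zero_mul, mul_zero, ite_self]
    have e3 : (∑ H ∈ Hset M hE, ∑ a ∈ range (H.card+1),
        (if r ≤ a then (H.card.choose a : ℤ) *
          (cc 1 1 * cc (a-r+1) j - cc 0 1 * cc (a-r) j) else 0))
        = ∑ H ∈ Hset M hE,
            (if (r-1) + j ≤ H.card then ((H.card-j-1).choose (r-1-1) : ℤ) else 0) := by
      refine Finset.sum_congr rfl fun H _ => ?_
      have hB := B3 (h := H.card) (ρ := r-1) (j := j) (by omega) (by omega)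
      rw [show r - 1 + 1 = r by omega] at hB
      rw [← hB]
      refine Finset.sum_congr rfl fun a _ => ?_
      by_cases ha : r ≤ a
      · rw [if_pos ha, if_pos ha, cc11, one_mul,
          cc_eq_zero (show 0 < 1 by omega), zero_mul, sub_zero,
          show a - r + 1 = a - (r-1) by omega]
      · rw [if_neg ha, if_neg ha]
    rw [e1, e2, e3, zero_add, zero_add]
    have hg := grouph hE hr h2 hpav hn b hb (fun k => ((r-2+k).choose (r-2) : ℤ)) (j+r-1)
    rw [show (∑ k ∈ range (n + 1), ((r - 2 + k).choose (r - 2) : ℤ) * b (k + j + r - 1))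
        = ∑ k ∈ range (n + 1), ((r - 2 + k).choose (r - 2) : ℤ) * b (k + (j + r - 1)) from
      Finset.sum_congr rfl fun k _ => by rw [show k + (j+r-1) = k + j + r - 1 by omega]]
    rw [hg]
    refine Finset.sum_congr rfl fun H hH => ?_
    by_cases hcase : j + r - 1 ≤ H.card
    · rw [if_pos hcase, if_pos (by omega)]
      congr 1
      congr 1 <;> omega
    · rw [if_neg hcase, if_neg (by omega)]
  · -- Case 4 : t_{0,j}, j > 0
    intro j hj
    rw [central hE hr h2 hpav hn 0 j]
    have e1 : (∑ a ∈ range (n+1),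
        if a < r then (n.choose a : ℤ) * (cc (r-a) 0 * cc 0 j) else 0) = 0 := by
      refine Finset.sum_eq_zero fun a _ => ?_
      rw [cc_eq_zero (show 0 < j by omega), mul_zero, mul_zero, ite_self]
    have e2 : (∑ a ∈ range (n+1),
        if r ≤ a then (n.choose a : ℤ) * (cc 0 0 * cc (a-r) j) else 0)
        = ((n-j-1).choose (r-1) : ℤ) := by
      rw [← B2 (N := n) (ρ := r) (j := j) (show 1 ≤ r by omega) (Or.inl h2)]
      refine Finset.sum_congr rfl fun a _ => ?_
      by_cases ha : r ≤ a
      · rw [if_pos ha, if_pos ha, cc00, one_mul]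
      · rw [if_neg ha, if_neg ha]
    have e3 : (∑ H ∈ Hset M hE, ∑ a ∈ range (H.card+1),
        (if r ≤ a then (H.card.choose a : ℤ) *
          (cc 1 0 * cc (a-r+1) j - cc 0 0 * cc (a-r) j) else 0))
        = ∑ H ∈ Hset M hE,
            -(if j + r - 1 ≤ H.card
                then ((r-1+(H.card-(j+r-1))).choose (r-1) : ℤ) else 0) := by
      refine Finset.sum_congr rfl fun H _ => ?_
      have hB := B2 (N := H.card) (ρ := r) (j := j-1) (show 1 ≤ r by omega) (Or.inl h2)
      have hval : ((H.card - (j-1) - 1).choose (r-1) : ℤ)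
          = (if j + r - 1 ≤ H.card
              then ((r-1+(H.card-(j+r-1))).choose (r-1) : ℤ) else 0) := by
        by_cases hcase : j + r - 1 ≤ H.card
        · rw [if_pos hcase]
          congr 2
          omega
        · rw [if_neg hcase, Nat.choose_eq_zero_of_lt (by omega)]
          norm_num
      rw [← hval, ← hB, ← Finset.sum_neg_distrib]
      refine Finset.sum_congr rfl fun a _ => ?_
      by_cases ha : r ≤ a
      · rw [if_pos ha, if_pos ha, cc_step (a-r) j (by omega)]
        ring
      · rw [if_neg ha, if_neg ha, neg_zero]
    rw [e1, e2, e3, zero_add, Finset.sum_neg_distrib]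
    have hg := grouph hE hr h2 hpav hn b hb (fun k => ((r-1+k).choose (r-1) : ℤ)) (j+r-1)
    rw [show (∑ k ∈ range (n + 1), ((r - 1 + k).choose (r - 1) : ℤ) * b (k + j + r - 1))
        = ∑ k ∈ range (n + 1), ((r - 1 + k).choose (r - 1) : ℤ) * b (k + (j + r - 1)) from
      Finset.sum_congr rfl fun k _ => by rw [show k + (j+r-1) = k + j + r - 1 by omega]]
    rw [hg]
    rw [sub_eq_add_neg]


end TuttePaper
end

section
/- For every matroid M with finite ground set E and rank function r, the identity (y-1)^{r(E)} T_M(x,y) = \bar{\chi}_M((x-1)(y-1), y) holds, where \bar{\chi}_M(\lambda, t) = \sum_{X \in F_M} t^{|X|} \chi_{M/X}(\lambda) is the coboundary polynomial of M, F_M is the set of flats of M, and \chi_N(\lambda) = \sum_{A \subseteq E(N)} (-1)^{|A|} \lambda^{r_N(E(N)) - r_N(A)} is the characteristic polynomial of a matroid N. -/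
open MvPolynomial Finset
open scoped Matroid

namespace TuttePaper

open Classical

variable {α : Type*}

section Aux

variable {M : Matroid α} {I J X Y F : Set α} {e : α}

lemma rk_eq_ncard_of_basis' (hE : M.E.Finite) (hI : M.IsBasis' I X) : rk M X = I.ncard := by
  apply IsGreatest.csSup_eq
  refine ⟨⟨I, hI.indep, hI.subset, rfl⟩, ?_⟩
  rintro n ⟨J, hJ, hJX, rfl⟩
  obtain ⟨I', hI', hJI'⟩ := hJ.subset_isBasis'_of_subset hJX
  have h1 : I'.encard = I.encard := hI'.encard_eq_encard hI
  have h2 : J.ncard ≤ I'.ncard := Set.ncard_le_ncard hJI' (hE.subset hI'.indep.subset_ground)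
  have h3 : I'.ncard = I.ncard := by rw [Set.ncard_def, h1, ← Set.ncard_def]
  omega

lemma rk_mono_s18 (hE : M.E.Finite) (hXY : X ⊆ Y) : rk M X ≤ rk M Y := by
  obtain ⟨I, hI⟩ := M.exists_isBasis' X
  obtain ⟨I', hI', hII'⟩ := hI.indep.subset_isBasis'_of_subset (hI.subset.trans hXY)
  rw [rk_eq_ncard_of_basis' hE hI, rk_eq_ncard_of_basis' hE hI']
  exact Set.ncard_le_ncard hII' (hE.subset hI'.indep.subset_ground)

lemma rk_le_ncard_s18 (hE : M.E.Finite) (hX : X.Finite) : rk M X ≤ X.ncard := by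
  obtain ⟨I, hI⟩ := M.exists_isBasis' X
  rw [rk_eq_ncard_of_basis' hE hI]
  exact Set.ncard_le_ncard hI.subset hX

lemma rk_insert_of_mem_closure (hE : M.E.Finite) (hX : X ⊆ M.E) (he : e ∈ M.closure X) :
    rk M (insert e X) = rk M X := by
  obtain ⟨I, hI⟩ := M.exists_isBasis X hX
  have hI2 : M.IsBasis I (insert e X) := by
    rw [Matroid.isBasis_iff_indep_subset_closure]
    refine ⟨hI.indep, hI.subset.trans (Set.subset_insert _ _), ?_⟩
    rw [hI.closure_eq_closure]
    exact Set.insert_subset he (M.subset_closure X hX)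
  rw [rk_eq_ncard_of_basis' hE hI2.isBasis', rk_eq_ncard_of_basis' hE hI.isBasis']

lemma flat_of_closure_eq (hX : X ⊆ M.E) (h : M.closure X = X) : M.IsFlat X := by
  refine ⟨fun I Y hI hIY => ?_, hX⟩
  have h2 := hIY.subset_closure
  rwa [hI.closure_eq_closure, h] at h2

lemma rk_restrict {R : Set α} (hXR : X ⊆ R) : rk (M ↾ R) X = rk M X := by
  unfold rk
  congr 1
  ext n
  simp only [Set.mem_setOf_eq, Matroid.restrict_indep_iff]
  exact ⟨fun ⟨I, ⟨hI, _⟩, hIX, h⟩ => ⟨I, hI, hIX, h⟩,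
    fun ⟨I, hI, hIX, h⟩ => ⟨I, ⟨hI, hIX.trans hXR⟩, hIX, h⟩⟩

lemma rk_dual_add (hE : M.E.Finite) (hY : Y ⊆ M.E) :
    rk M✶ Y + rk M M.E = Y.ncard + rk M (M.E \ Y) := by
  obtain ⟨I, hI⟩ := M.exists_isBasis (M.E \ Y) Set.diff_subset
  obtain ⟨B, hB, hIB⟩ := hI.indep.exists_isBase_superset
  have hBI : B ∩ (M.E \ Y) = I :=
    (hI.eq_of_subset_indep (hB.indep.inter_right _)
      (Set.subset_inter hIB hI.subset) Set.inter_subset_right).symm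
  have hdb := hB.compl_inter_isBasis_of_inter_isBasis (X := M.E \ Y) (by rwa [hBI])
  rw [Set.diff_diff_cancel_left hY] at hdb
  have hBE : B ⊆ M.E := hB.subset_ground
  have heq1 : (M.E \ B) ∩ Y = Y \ B := by
    ext x
    constructor
    · rintro ⟨⟨_, h2⟩, h3⟩; exact ⟨h3, h2⟩
    · rintro ⟨h1, h2⟩; exact ⟨⟨hY h1, h2⟩, h1⟩
  rw [heq1] at hdb
  have heq2 : B ∩ (M.E \ Y) = B \ Y := by
    ext x
    constructor
    · rintro ⟨h1, _, h3⟩; exact ⟨h1, h3⟩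
    · rintro ⟨h1, h2⟩; exact ⟨h1, hBE h1, h2⟩
  have e1 : rk M✶ Y = (Y \ B).ncard := rk_eq_ncard_of_basis' hE hdb.isBasis'
  have e2 : rk M M.E = B.ncard := rk_eq_ncard_of_basis' hE hB.isBasis_ground.isBasis'
  have e3 : rk M (M.E \ Y) = (B \ Y).ncard := by
    rw [rk_eq_ncard_of_basis' hE hI.isBasis', ← hBI, heq2]
  have hYfin : Y.Finite := hE.subset hY
  have hBfin : B.Finite := hE.subset hBE
  have c1 : (Y ∩ B).ncard + (Y \ B).ncard = Y.ncard :=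
    Set.ncard_inter_add_ncard_diff_eq_ncard Y B hYfin
  have c2 : (B ∩ Y).ncard + (B \ Y).ncard = B.ncard :=
    Set.ncard_inter_add_ncard_diff_eq_ncard B Y hBfin
  have c3 : (Y ∩ B).ncard = (B ∩ Y).ncard := by rw [Set.inter_comm]
  rw [e1, e2, e3]
  omega

lemma contractSet_ground (M : Matroid α) (C : Set α) : (contractSet M C).E = M.E \ C := rfl

lemma rk_contract_add {A : Set α} (hE : M.E.Finite) (hF : F ⊆ M.E) (hA : A ⊆ M.E \ F) :
    rk (contractSet M F) A + rk M F = rk M (F ∪ A) := by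
  have hNfin : (M✶ ↾ (M.E \ F)).E.Finite := show (M.E \ F).Finite from hE.diff
  have h1 := rk_dual_add (M := M✶ ↾ (M.E \ F)) hNfin (show A ⊆ M.E \ F from hA)
  have e1 : rk (M✶ ↾ (M.E \ F)) ((M✶ ↾ (M.E \ F)).E) = rk M✶ (M.E \ F) :=
    rk_restrict (Set.Subset.refl (M.E \ F))
  have e2 : rk (M✶ ↾ (M.E \ F)) ((M✶ ↾ (M.E \ F)).E \ A) = rk M✶ ((M.E \ F) \ A) :=
    rk_restrict Set.diff_subset
  have h2 := rk_dual_add hE (Y := M.E \ F) Set.diff_subset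
  rw [Set.diff_diff_cancel_left hF] at h2
  have h3 := rk_dual_add hE (Y := (M.E \ F) \ A) (Set.diff_subset.trans Set.diff_subset)
  have e3 : M.E \ ((M.E \ F) \ A) = F ∪ A := by
    ext x
    constructor
    · rintro ⟨hxE, hx⟩
      by_contra hc
      simp only [Set.mem_union, not_or] at hc
      exact hx ⟨⟨hxE, hc.1⟩, hc.2⟩
    · rintro (hxF | hxA)
      · exact ⟨hF hxF, fun h => h.1.2 hxF⟩
      · exact ⟨(hA hxA).1, fun h => h.2 hxA⟩
  rw [e3] at h3
  have hcard : ((M.E \ F) \ A).ncard + A.ncard = (M.E \ F).ncard :=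
    Set.ncard_diff_add_ncard_of_subset hA hE.diff
  rw [e1, e2] at h1
  unfold contractSet
  omega

end Aux

noncomputable def Saux (M : Matroid α) (E : Finset α) (B : Finset α) : MvPolynomial (Fin 2) ℤ :=
  ∑ C ∈ (E \ B).powerset,
    (-1) ^ C.card * ((X 0 - 1) * (X 1 - 1)) ^ (rk M M.E - rk M ↑(B ∪ C))

section Main

variable {M : Matroid α}

lemma lhs_eq (hE : M.E.Finite) :
    (X 1 - 1) ^ (rk M M.E) * tutte M
      = ∑ B ∈ hE.toFinset.powerset,
          (X 1 : MvPolynomial (Fin 2) ℤ) ^ B.card * Saux M hE.toFinset B := by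
  classical
  rw [tutte, dif_pos hE, Finset.mul_sum]
  have hsub : ∀ A : Finset α, A ∈ hE.toFinset.powerset → (A : Set α) ⊆ M.E := by
    intro A hA
    rw [Finset.mem_powerset] at hA
    rw [← hE.coe_toFinset]
    exact_mod_cast hA
  calc
    ∑ A ∈ hE.toFinset.powerset, (X 1 - 1) ^ (rk M M.E) *
        ((X 0 - 1) ^ (rk M M.E - rk M ↑A) * (X 1 - 1) ^ (A.card - rk M ↑A))
      = ∑ A ∈ hE.toFinset.powerset, ∑ B ∈ A.powerset,
          ((X 0 - 1) * (X 1 - 1)) ^ (rk M M.E - rk M ↑A) *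
            ((X 1 : MvPolynomial (Fin 2) ℤ) ^ B.card * (-1) ^ ((A \ B).card)) := by
        refine Finset.sum_congr rfl fun A hA => ?_
        have h1 : rk M ↑A ≤ rk M M.E := rk_mono_s18 hE (hsub A hA)
        have h2 : rk M ↑A ≤ A.card := by
          have h := rk_le_ncard_s18 (M := M) (X := ↑A) hE A.finite_toSet
          rwa [Set.ncard_coe_finset] at h
        have hexp : rk M M.E + (A.card - rk M ↑A) = (rk M M.E - rk M ↑A) + A.card := by omega
        have hbin : ((X 1 : MvPolynomial (Fin 2) ℤ) - 1) ^ A.card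
            = ∑ B ∈ A.powerset,
                (X 1 : MvPolynomial (Fin 2) ℤ) ^ B.card * (-1) ^ ((A \ B).card) := by
          have h := Finset.prod_add (fun _ : α => (X 1 : MvPolynomial (Fin 2) ℤ))
            (fun _ => (-1 : MvPolynomial (Fin 2) ℤ)) A
          simpa [Finset.prod_const, sub_eq_add_neg] using h
        calc (X 1 - 1 : MvPolynomial (Fin 2) ℤ) ^ (rk M M.E) *
              ((X 0 - 1) ^ (rk M M.E - rk M ↑A) * (X 1 - 1) ^ (A.card - rk M ↑A))
            = (X 0 - 1) ^ (rk M M.E - rk M ↑A) *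
                (X 1 - 1) ^ (rk M M.E + (A.card - rk M ↑A)) := by rw [pow_add]; ring
          _ = (X 0 - 1) ^ (rk M M.E - rk M ↑A) *
                ((X 1 - 1) ^ (rk M M.E - rk M ↑A) * (X 1 - 1) ^ A.card) := by
                rw [hexp, pow_add]
          _ = ((X 0 - 1) * (X 1 - 1)) ^ (rk M M.E - rk M ↑A) * (X 1 - 1) ^ A.card := by
                rw [mul_pow]; ring
          _ = _ := by rw [hbin, Finset.mul_sum]
    _ = ∑ B ∈ hE.toFinset.powerset, ∑ A ∈ hE.toFinset.powerset.filter (fun A => B ⊆ A),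
          ((X 0 - 1) * (X 1 - 1)) ^ (rk M M.E - rk M ↑A) *
            ((X 1 : MvPolynomial (Fin 2) ℤ) ^ B.card * (-1) ^ ((A \ B).card)) := by
        refine Finset.sum_comm' ?_
        intro A B
        simp only [Finset.mem_powerset, Finset.mem_filter]
        constructor
        · rintro ⟨h1, h2⟩; exact ⟨⟨h1, h2⟩, h2.trans h1⟩
        · rintro ⟨⟨h1, h2⟩, _⟩; exact ⟨h1, h2⟩
    _ = ∑ B ∈ hE.toFinset.powerset,
          (X 1 : MvPolynomial (Fin 2) ℤ) ^ B.card * Saux M hE.toFinset B := by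
        refine Finset.sum_congr rfl fun B hB => ?_
        rw [Finset.mem_powerset] at hB
        rw [Saux, Finset.mul_sum]
        refine Finset.sum_nbij' (fun A => A \ B) (fun C => B ∪ C) ?_ ?_ ?_ ?_ ?_
        · intro A hA
          rw [Finset.mem_filter, Finset.mem_powerset] at hA
          rw [Finset.mem_powerset]
          exact Finset.sdiff_subset_sdiff hA.1 Finset.Subset.rfl
        · intro C hC
          rw [Finset.mem_powerset] at hC
          rw [Finset.mem_filter, Finset.mem_powerset]
          exact ⟨Finset.union_subset hB (hC.trans Finset.sdiff_subset),
            Finset.subset_union_left⟩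
        · intro A hA
          rw [Finset.mem_filter] at hA
          exact Finset.union_sdiff_of_subset hA.2
        · intro C hC
          rw [Finset.mem_powerset] at hC
          ext x
          simp only [Finset.mem_sdiff, Finset.mem_union]
          constructor
          · rintro ⟨h1 | h1, h2⟩
            · exact absurd h1 h2
            · exact h1
          · intro hx
            exact ⟨Or.inr hx, fun hxB => (Finset.mem_sdiff.mp (hC hx)).2 hxB⟩
        · intro A hA
          rw [Finset.mem_filter] at hA
          rw [Finset.union_sdiff_of_subset hA.2]
          ring

lemma Saux_eq_zero (hE : M.E.Finite) {B : Finset α} (hB : B ⊆ hE.toFinset)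
    (hflat : ¬ M.IsFlat ↑B) : Saux M hE.toFinset B = 0 := by
  classical
  have hBE : (B : Set α) ⊆ M.E := by rw [← hE.coe_toFinset]; exact_mod_cast hB
  have hne : M.closure ↑B ≠ ↑B := fun h => hflat (flat_of_closure_eq hBE h)
  obtain ⟨e, heCl, heB⟩ := Set.exists_of_ssubset
    (HasSubset.Subset.ssubset_of_ne (M.subset_closure ↑B hBE) (Ne.symm hne))
  have heE : e ∈ M.E := M.mem_ground_of_mem_closure heCl
  have heEf : e ∈ hE.toFinset := hE.mem_toFinset.mpr heE
  have heBf : e ∉ B := by simpa using heB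
  have hpair : ∀ C : Finset α, C ⊆ hE.toFinset \ B → e ∉ C →
      ((-1 : MvPolynomial (Fin 2) ℤ) ^ (insert e C).card *
        ((X 0 - 1) * (X 1 - 1)) ^ (rk M M.E - rk M ↑(B ∪ insert e C)))
      = -((-1) ^ C.card * ((X 0 - 1) * (X 1 - 1)) ^ (rk M M.E - rk M ↑(B ∪ C))) := by
    intro C hC heC
    have hsub : (↑(B ∪ C) : Set α) ⊆ M.E := by
      rw [← hE.coe_toFinset]
      exact_mod_cast Finset.union_subset hB (hC.trans Finset.sdiff_subset)
    have hrk : rk M ↑(B ∪ insert e C) = rk M ↑(B ∪ C) := by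
      rw [Finset.union_insert, Finset.coe_insert]
      refine rk_insert_of_mem_closure hE hsub (M.closure_subset_closure ?_ heCl)
      exact_mod_cast Finset.subset_union_left
    rw [hrk, Finset.card_insert_of_notMem heC, pow_succ]
    ring
  rw [Saux]
  refine Finset.sum_involution
    (fun C _ => if e ∈ C then C.erase e else insert e C) ?_ ?_ ?_ ?_
  · intro C hC
    beta_reduce
    rw [Finset.mem_powerset] at hC
    by_cases heC : e ∈ C
    · rw [if_pos heC]
      have h := hpair (C.erase e) ((Finset.erase_subset _ _).trans hC)
        (Finset.notMem_erase _ _)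
      rw [Finset.insert_erase heC] at h
      rw [h]; ring
    · rw [if_neg heC, hpair C hC heC]; ring
  · intro C hC _
    beta_reduce
    by_cases heC : e ∈ C
    · rw [if_pos heC]
      intro hcon
      exact Finset.notMem_erase e C (by rw [hcon]; exact heC)
    · rw [if_neg heC]
      intro hcon
      exact heC (by rw [← hcon]; exact Finset.mem_insert_self e C)
  · intro C hC
    beta_reduce
    rw [Finset.mem_powerset] at hC ⊢
    by_cases heC : e ∈ C
    · rw [if_pos heC]
      exact (Finset.erase_subset _ _).trans hC
    · rw [if_neg heC]
      exact Finset.insert_subset (Finset.mem_sdiff.mpr ⟨heEf, heBf⟩) hC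
  · intro C hC
    beta_reduce
    by_cases heC : e ∈ C
    · rw [if_pos heC, if_neg (Finset.notMem_erase e C), Finset.insert_erase heC]
    · rw [if_neg heC, if_pos (Finset.mem_insert_self e C), Finset.erase_insert heC]

lemma charEval_contract (hE : M.E.Finite) {F : Finset α} (hF : F ⊆ hE.toFinset) :
    charEval (contractSet M ↑F) ((X 0 - 1) * (X 1 - 1) : MvPolynomial (Fin 2) ℤ)
      = Saux M hE.toFinset F := by
  classical
  have hFE : (F : Set α) ⊆ M.E := by rw [← hE.coe_toFinset]; exact_mod_cast hF
  have hNfin : (contractSet M ↑F).E.Finite := by rw [contractSet_ground]; exact hE.diff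
  rw [charEval, dif_pos hNfin, Saux]
  have hidx : hNfin.toFinset = hE.toFinset \ F := by
    ext x
    simp only [Set.Finite.mem_toFinset, contractSet_ground, Set.mem_diff,
      Finset.mem_sdiff, hE.mem_toFinset, Finset.mem_coe]
  rw [hidx]
  refine Finset.sum_congr rfl fun A hA => ?_
  rw [Finset.mem_powerset] at hA
  have hA' : (A : Set α) ⊆ M.E \ ↑F := by
    intro x hx
    have hx' : x ∈ hE.toFinset \ F := hA (by exact_mod_cast hx)
    rw [Finset.mem_sdiff, hE.mem_toFinset] at hx'
    exact ⟨hx'.1, by simpa using hx'.2⟩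
  have h1 := rk_contract_add (A := (A : Set α)) hE hFE hA'
  have h2 := rk_contract_add (A := M.E \ (F : Set α)) hE hFE (Set.Subset.refl _)
  rw [Set.union_diff_cancel hFE] at h2
  have hexp : rk (contractSet M ↑F) (contractSet M ↑F).E - rk (contractSet M ↑F) ↑A
      = rk M M.E - rk M ↑(F ∪ A) := by
    rw [contractSet_ground, Finset.coe_union]
    omega
  rw [hexp]


/-- the relation `(y-1)^{r(E)} T_M(x,y) = χ̄_M((x-1)(y-1), y)` between the
Tutte polynomial and Crapo's coboundary polynomial. -/
theorem tutte_coboundary (M : Matroid α) (hE : M.E.Finite) :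
    (X 1 - 1) ^ (rk M M.E) * tutte M = cobEval M ((X 0 - 1) * (X 1 - 1)) (X 1) := by
  classical
  rw [lhs_eq hE, cobEval, dif_pos hE]
  rw [← Finset.sum_filter_of_ne (p := fun B : Finset α => M.IsFlat ↑B)
    (fun B hB hne => by
      by_contra hflat
      exact hne (by rw [Saux_eq_zero hE (Finset.mem_powerset.mp hB) hflat, mul_zero]))]
  refine Finset.sum_congr rfl fun F hF => ?_
  rw [Finset.mem_filter, Finset.mem_powerset] at hF
  rw [charEval_contract hE hF.1]


end Main

end TuttePaper
end
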